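/- Let K be a field of characteristic 0 and d < n. Writing the Schur polynomial s_λ in n variables for a partition λ of d, one has D(s_λ) = ∑_{μ: λ = μ ∪ box} (n + d_{λ\μ}) s_μ, where the sum is over partitions μ obtained from λ by removing one box, and d_{λ\μ} = j - i if the removed box is in row i and column j. -/

import Mathlib

open MvPolynomial

/-- `h_k` for an integer index, with `h_k = 0` for `k < 0`. -/
noncomputable def hz (K : Type*) [CommRing K] (n : ℕ) (k : ℤ) : MvPolynomial (Fin n) K :=
  if 0 ≤ k then hsymm (Fin n) K k.toNat else 0

/-- The Schur polynomial in `n` variables attached to a partition `λ` with at most `n`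
parts (written as an antitone function `Fin n → ℕ`), via the Jacobi–Trudi determinant
`s_λ = det(h_{λᵢ - i + j})`. -/
noncomputable def schur (K : Type*) [CommRing K] (n : ℕ) (lam : Fin n → ℕ) :
    MvPolynomial (Fin n) K :=
  Matrix.det (Matrix.of fun i j : Fin n => hz K n ((lam i : ℤ) - (i : ℤ) + (j : ℤ)))

lemma prod_map_X {σ R : Type*} [DecidableEq σ] [CommSemiring R] (m : Multiset σ) :
    (m.map X).prod = monomial (m.toFinsupp : σ →₀ ℕ) (1:R) := by
  induction m using Multiset.induction with
  | empty => simp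
  | cons a s ih =>
    rw [Multiset.map_cons, Multiset.prod_cons, ih, show a ::ₘ s = {a} + s from rfl,
      Multiset.toFinsupp_add, Multiset.toFinsupp_singleton, X, monomial_mul, one_mul]

lemma hsymm_eq {σ R : Type*} [DecidableEq σ] [Fintype σ] [CommSemiring R] (k : ℕ) :
    hsymm σ R k = ∑ s : Sym σ k, monomial (s.1.toFinsupp : σ →₀ ℕ) (1:R) := by
  rw [hsymm]; exact Finset.sum_congr rfl fun s _ => prod_map_X s.1

lemma sum_pderiv_hsymm {K : Type*} [CommRing K] (n k : ℕ) :
    ∑ i : Fin n, pderiv i (hsymm (Fin n) K (k+1)) = C ((n + k : ℕ) : K) * hsymm (Fin n) K k := by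
  rw [hsymm_eq, hsymm_eq, Finset.mul_sum]
  simp only [map_sum, pderiv_monomial, one_mul]
  have key : ∀ i : Fin n,
      (∑ s : Sym (Fin n) (k+1), monomial (s.1.toFinsupp - Finsupp.single i 1)
        ((s.1.toFinsupp i : K))) =
      ∑ t : Sym (Fin n) k, monomial (t.1.toFinsupp : Fin n →₀ ℕ) ((t.1.count i + 1 : ℕ) : K) := by
    intro i
    rw [← Finset.sum_filter_of_ne (p := fun s : Sym (Fin n) (k+1) => i ∈ s)]
    · refine Finset.sum_bij'
        (i := fun s hs => s.erase i (by simpa using (Finset.mem_filter.mp hs).2))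
        (j := fun t _ => i ::ₛ t) ?_ ?_ ?_ ?_ ?_
      · intro s hs; exact Finset.mem_univ _
      · intro t ht
        simp only [Finset.mem_filter, Finset.mem_univ, true_and]
        exact Sym.mem_cons_self i t
      · intro s hs
        exact Sym.cons_erase _
      · intro t ht
        exact Sym.erase_cons_head t i
      · intro s hs
        have hmem : i ∈ s := by simpa using (Finset.mem_filter.mp hs).2
        have hs1 : s.1 = i ::ₘ (s.erase i hmem).1 := by
          conv_lhs => rw [← Sym.cons_erase hmem]
          exact Sym.coe_cons _ _
        show monomial (s.1.toFinsupp - Finsupp.single i 1) ((s.1.toFinsupp i : K)) = _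
        congr 1
        · rw [hs1, show (i ::ₘ (s.erase i hmem).1) = {i} + (s.erase i hmem).1 from rfl,
            Multiset.toFinsupp_add, Multiset.toFinsupp_singleton, add_tsub_cancel_left]
        · rw [hs1]
          simp [Multiset.toFinsupp_apply]
    · intro s _ hne
      by_contra h
      apply hne
      have hcount : s.1.count i = 0 := Multiset.count_eq_zero.mpr (by simpa using h)
      have hc : ((s.1.toFinsupp i : ℕ) : K) = 0 := by
        rw [Multiset.toFinsupp_apply, hcount, Nat.cast_zero]
      rw [hc, map_zero]
  rw [Finset.sum_congr rfl fun i _ => key i, Finset.sum_comm]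
  refine Finset.sum_congr rfl fun t _ => ?_
  rw [← map_sum (monomial _), C_mul_monomial, mul_one]
  congr 1
  push_cast
  rw [Finset.sum_add_distrib, Finset.sum_const, Finset.card_univ, Fintype.card_fin,
    nsmul_eq_mul, mul_one, ← Nat.cast_sum,
    Multiset.sum_count_eq_card (fun a _ => Finset.mem_univ a), t.2, add_comm]


lemma derivation_prod {R A ι : Type*} [CommRing R] [CommRing A] [Algebra R A] [DecidableEq ι]
    (D : Derivation R A A) (s : Finset ι) (f : ι → A) :
    D (∏ j ∈ s, f j) = ∑ j ∈ s, D (f j) * ∏ k ∈ s.erase j, f k := by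
  induction s using Finset.induction with
  | empty => simp
  | insert a s ha ih =>
    rw [Finset.prod_insert ha, D.leibniz, smul_eq_mul, smul_eq_mul, ih, Finset.sum_insert ha,
      Finset.erase_insert ha, Finset.mul_sum]
    rw [add_comm]
    congr 1
    · ring
    refine Finset.sum_congr rfl fun j hj => ?_
    rw [Finset.erase_insert_of_ne (show a ≠ j from fun h => ha (by rw [h]; exact hj)), Finset.prod_insert
      (fun h => ha (Finset.mem_of_mem_erase h))]
    ring

lemma derivation_det {R A : Type*} [CommRing R] [CommRing A] [Algebra R A] {n : ℕ}
    (D : Derivation R A A) (M : Matrix (Fin n) (Fin n) A) :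
    D M.det = ∑ r : Fin n, (M.updateRow r fun j => D (M r j)).det := by
  have hz : ∀ (z : ℤˣ) (x : A), D (z • x) = z • D x := fun z x => by
    rcases Int.units_eq_one_or z with h | h <;> simp [h]
  simp only [Matrix.det_apply, map_sum, hz, derivation_prod]
  rw [Finset.sum_comm]
  refine Finset.sum_congr rfl fun σ _ => ?_
  rw [← Finset.smul_sum]
  congr 1
  rw [← Equiv.sum_comp σ (fun r => ∏ j, (M.updateRow r fun j => D (M r j)) (σ j) j)]
  refine Finset.sum_congr rfl fun j₀ _ => ?_
  rw [← Finset.mul_prod_erase Finset.univ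
    (fun j => (M.updateRow (σ j₀) fun j => D (M (σ j₀) j)) (σ j) j) (Finset.mem_univ j₀)]
  congr 1
  · rw [Matrix.updateRow_apply, if_pos rfl]
  · refine Finset.prod_congr rfl fun k hk => ?_
    rw [Matrix.updateRow_apply, if_neg (fun h => (Finset.mem_erase.mp hk).1 (σ.injective h))]

lemma det_updateRow_fsum {R ι : Type*} [CommRing R] [DecidableEq ι] {n : ℕ}
    (A : Matrix (Fin n) (Fin n) R) (r : Fin n) (s : Finset ι) (f : ι → Fin n → R) :
    (A.updateRow r (∑ l ∈ s, f l)).det = ∑ l ∈ s, (A.updateRow r (f l)).det := by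
  induction s using Finset.induction with
  | empty =>
    rw [Finset.sum_empty, Finset.sum_empty]
    exact Matrix.det_eq_zero_of_row_eq_zero r (fun j => by simp)
  | insert a s ha ih =>
    rw [Finset.sum_insert ha, Finset.sum_insert ha, Matrix.det_updateRow_add, ih]

lemma sum_pderiv_hz (K : Type*) [CommRing K] (n : ℕ) (k : ℤ) :
    ∑ i : Fin n, pderiv i (hz K n k) = C ((n : K) - 1 + (k : K)) * hz K n (k - 1) := by
  rcases lt_trichotomy k 0 with h | h | h
  · rw [hz, if_neg (not_le.mpr h), hz, if_neg (by omega)]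
    simp
  · subst h
    rw [hz, if_pos le_rfl, hz, if_neg (by omega)]
    simp [hsymm_zero]
  · obtain ⟨m, rfl⟩ : ∃ m : ℕ, k = (m : ℤ) + 1 := ⟨(k - 1).toNat, by omega⟩
    rw [hz, if_pos (by omega), hz, if_pos (by omega)]
    have h1 : ((m : ℤ) + 1).toNat = m + 1 := by omega
    have h2 : ((m : ℤ) + 1 - 1).toNat = m := by omega
    rw [h1, h2, sum_pderiv_hsymm]
    congr 1
    push_cast
    ring

/-- In characteristic `0`, for a partition `λ ⊢ d` with `d < n`,
`D(s_λ) = ∑_{μ = λ minus a box} (n + d_{λ\μ}) s_μ`, where `D = ∑ᵢ ∂/∂xᵢ` and, for a box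
removed in (1-indexed) row `i` and column `j`, `n + d_{λ\μ} = n + j - i`. -/
theorem sum_pderiv_schur (K : Type*) [Field K] [CharZero K] (n d : ℕ)
    (hd : 1 ≤ d) (hdn : d < n) (lam : Fin n → ℕ) (hanti : Antitone lam)
    (hsum : ∑ i, lam i = d) :
    (∑ i : Fin n, pderiv i (schur K n lam)) =
      ∑ i ∈ Finset.univ.filter
          (fun i : Fin n => 0 < lam i ∧ Antitone (Function.update lam i (lam i - 1))),
        ((n + lam i - (i.val + 1) : ℕ) : MvPolynomial (Fin n) K) *
          schur K n (Function.update lam i (lam i - 1)) := by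
  classical
  set R := MvPolynomial (Fin n) K
  set M : Matrix (Fin n) (Fin n) R :=
    Matrix.of (fun i j : Fin n => hz K n ((lam i : ℤ) - (i : ℤ) + (j : ℤ))) with hM
  set N : Matrix (Fin n) (Fin n) R :=
    Matrix.of (fun i j : Fin n => hz K n ((lam i : ℤ) - (i : ℤ) + (j : ℤ) - 1)) with hN
  -- Step 1: LHS = ∑ r, det (M.updateRow r (fun j => ∑ i, pderiv i (M r j)))
  have step1 : (∑ i : Fin n, pderiv i (schur K n lam)) =
      ∑ r : Fin n, (M.updateRow r (fun j => ∑ i : Fin n, pderiv i (M r j))).det := by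
    have : ∀ i : Fin n, pderiv i (schur K n lam) =
        ∑ r : Fin n, (M.updateRow r (fun j => pderiv i (M r j))).det := fun i =>
      derivation_det (pderiv i) M
    rw [Finset.sum_congr rfl fun i _ => this i, Finset.sum_comm]
    refine Finset.sum_congr rfl fun r _ => ?_
    rw [← det_updateRow_fsum M r Finset.univ (fun i j => pderiv i (M r j))]
    have hrow : (∑ l : Fin n, fun j => pderiv l (M r j)) = (fun j => ∑ i : Fin n, pderiv i (M r j)) := by
      funext j
      exact Finset.sum_apply _ _ _
    rw [hrow]
  -- Step 2: rewrite each row derivative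
  have step2 : ∀ r : Fin n, (fun j => ∑ i : Fin n, pderiv i (M r j)) =
      ((C ((n : K) - 1 + ((lam r : ℤ) : K) - (r.val : K)) : R) • fun j => N r j) +
      (fun j : Fin n => C ((j.val : K)) * N r j) := by
    intro r
    funext j
    have := sum_pderiv_hz K n ((lam r : ℤ) - (r : ℤ) + (j : ℤ))
    simp only [hM, hN, Matrix.of_apply, Pi.add_apply, Pi.smul_apply, smul_eq_mul]
    rw [this, ← add_mul]
    congr 1
    rw [← C_add]
    congr 1
    push_cast
    ring
  -- Claim B : the column-shift part sums to zero
  set wl : Fin n → Fin n → R := fun l j => if j.val = l.val + 1 then 1 else 0 with hwl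
  have claimB : ∑ r : Fin n, (M.updateRow r (fun j : Fin n => C ((j.val : K)) * N r j)).det = 0 := by
    have hrow : ∀ r : Fin n, (fun j : Fin n => C ((j.val : K)) * N r j)
        = ∑ l : Fin n, (C (((l.val + 1 : ℕ) : K)) * M r l) • wl l := by
      intro r
      funext j
      rw [show (∑ l : Fin n, (C (((l.val + 1 : ℕ) : K)) * M r l) • wl l) j
          = ∑ l : Fin n, ((C (((l.val + 1 : ℕ) : K)) * M r l) • wl l) j from
        Finset.sum_apply _ _ _]
      simp only [Pi.smul_apply, hwl, smul_eq_mul, mul_ite, mul_one, mul_zero]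
      by_cases hj : j.val = 0
      · rw [Finset.sum_eq_zero (fun l _ => if_neg (by omega))]
        have h0 : ((j.val : K)) = 0 := by rw [hj]; norm_num
        rw [h0, map_zero, zero_mul]
      · have hlt : j.val - 1 < n := by omega
        rw [Finset.sum_eq_single (⟨j.val - 1, hlt⟩ : Fin n)]
        · rw [if_pos (by simp; omega)]
          have h1 : ((j.val - 1 + 1 : ℕ) : K) = ((j.val : K)) := by
            congr 1; omega
          have h2 : M r ⟨j.val - 1, hlt⟩ = N r j := by
            simp only [hM, hN, Matrix.of_apply]
            congr 1
            have : ((j.val : ℤ)) - 1 = ((j.val - 1 : ℕ) : ℤ) := by omega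
            push_cast
            omega
          rw [h1, h2]
        · intro b _ hb
          refine if_neg fun h => hb ?_
          apply Fin.ext
          simp only []
          omega
        · intro h
          exact absurd (Finset.mem_univ _) h
    calc ∑ r : Fin n, (M.updateRow r (fun j : Fin n => C ((j.val : K)) * N r j)).det
        = ∑ r : Fin n, ∑ l : Fin n,
            (C (((l.val + 1 : ℕ) : K)) * M r l) * (M.updateRow r (wl l)).det := by
          refine Finset.sum_congr rfl fun r _ => ?_
          rw [hrow r, det_updateRow_fsum]
          exact Finset.sum_congr rfl fun l _ => Matrix.det_updateRow_smul M r _ (wl l)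
      _ = 0 := by
          rw [Finset.sum_comm]
          refine Finset.sum_eq_zero fun l _ => ?_
          by_cases hl : l.val + 1 < n
          · have hw : wl l = Pi.single (⟨l.val + 1, hl⟩ : Fin n) (1 : R) := by
              funext j
              rw [Pi.single_apply, hwl]
              simp only []
              refine if_congr ?_ rfl rfl
              rw [Fin.ext_iff]
            have key : ∀ r : Fin n, (M.updateRow r (wl l)).det
                = Matrix.adjugate M (⟨l.val + 1, hl⟩ : Fin n) r := by
              intro r
              rw [hw, Matrix.adjugate_apply]
            calc ∑ r : Fin n, (C (((l.val + 1 : ℕ) : K)) * M r l) * (M.updateRow r (wl l)).det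
                = C (((l.val + 1 : ℕ) : K)) *
                    ∑ r : Fin n, Matrix.adjugate M (⟨l.val + 1, hl⟩ : Fin n) r * M r l := by
                  rw [Finset.mul_sum]
                  refine Finset.sum_congr rfl fun r _ => ?_
                  rw [key r]; ring
              _ = C (((l.val + 1 : ℕ) : K)) *
                    ((Matrix.adjugate M * M) (⟨l.val + 1, hl⟩ : Fin n) l) := by
                  rw [Matrix.mul_apply]
              _ = 0 := by
                  rw [Matrix.adjugate_mul]
                  have hne : (⟨l.val + 1, hl⟩ : Fin n) ≠ l := by
                    refine Fin.ne_of_val_ne ?_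
                    simp only []
                    omega
                  rw [Matrix.smul_apply, Matrix.one_apply_ne hne, smul_zero, mul_zero]
          · have hw : wl l = 0 := by
              funext j
              exact if_neg (by omega)
            refine Finset.sum_eq_zero fun r _ => ?_
            rw [hw]
            have : (M.updateRow r (0 : Fin n → R)).det = 0 :=
              Matrix.det_eq_zero_of_row_eq_zero r (fun j => by simp)
            rw [this, mul_zero]
  -- Claim S : the main part
  have claimS : ∑ r : Fin n,
      C ((n : K) - 1 + ((lam r : ℤ) : K) - (r.val : K)) * (M.updateRow r (fun j => N r j)).det =
      ∑ i ∈ Finset.univ.filter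
          (fun i : Fin n => 0 < lam i ∧ Antitone (Function.update lam i (lam i - 1))),
        ((n + lam i - (i.val + 1) : ℕ) : MvPolynomial (Fin n) K) *
          schur K n (Function.update lam i (lam i - 1)) := by
    have antitone_update : ∀ r : Fin n, 0 < lam r → (∀ b : Fin n, r < b → lam b < lam r) →
        Antitone (Function.update lam r (lam r - 1)) := by
      intro r hpos hb a c hac
      by_cases hc : c = r
      · subst hc
        by_cases ha : a = c
        · subst ha; exact le_rfl
        · rw [Function.update_self, Function.update_of_ne ha]
          have := hanti hac
          omega
      · rw [Function.update_of_ne hc]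
        by_cases ha : a = r
        · subst ha
          rw [Function.update_self]
          have hlt : a < c := lt_of_le_of_ne hac (Ne.symm hc)
          have := hb c hlt
          omega
        · rw [Function.update_of_ne ha]
          exact hanti hac
    have antifail : ∀ r : Fin n,
        ¬(0 < lam r ∧ Antitone (Function.update lam r (lam r - 1))) →
        (M.updateRow r (fun j => N r j)).det = 0 := by
      intro r hp
      by_cases hr : r.val + 1 < n
      · have hrlt : r < (⟨r.val + 1, hr⟩ : Fin n) :=
          Fin.lt_def.mpr (Nat.lt_succ_self r.val)
        have heq : lam (⟨r.val + 1, hr⟩ : Fin n) = lam r := by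
          by_cases h0 : lam r = 0
          · have := hanti hrlt.le
            omega
          · by_contra hne
            have hlt : lam (⟨r.val + 1, hr⟩ : Fin n) < lam r :=
              lt_of_le_of_ne (hanti hrlt.le) hne
            refine hp ⟨Nat.pos_of_ne_zero h0, antitone_update r (Nat.pos_of_ne_zero h0) ?_⟩
            intro b hbr
            have hb' : (⟨r.val + 1, hr⟩ : Fin n) ≤ b := by
              simp only [Fin.le_def, Fin.val_mk]
              rw [Fin.lt_def] at hbr
              omega
            exact lt_of_le_of_lt (hanti hb') hlt
        apply Matrix.det_zero_of_row_eq (show r ≠ (⟨r.val + 1, hr⟩ : Fin n) from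
          Fin.ne_of_val_ne (by simp only [Fin.val_mk]; omega))
        rw [Matrix.updateRow_self, Matrix.updateRow_ne (Ne.symm (Fin.ne_of_val_ne
          (show r.val ≠ r.val + 1 by omega)))]
        funext j
        simp only [hM, hN, Matrix.of_apply]
        congr 1
        rw [heq]
        have hv : (((⟨r.val + 1, hr⟩ : Fin n) : ℕ) : ℤ) = (r.val : ℤ) + 1 := rfl
        rw [hv]
        push_cast
        ring
      · have hrn : r.val + 1 = n := by have := r.isLt; omega
        have h0 : lam r = 0 := by
          by_contra hpos
          refine hp ⟨Nat.pos_of_ne_zero hpos, antitone_update r (Nat.pos_of_ne_zero hpos) ?_⟩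
          intro b hbr
          rw [Fin.lt_def] at hbr
          have := b.isLt
          omega
        apply Matrix.det_eq_zero_of_row_eq_zero r
        intro j
        rw [Matrix.updateRow_self]
        simp only [hN, Matrix.of_apply]
        rw [hz, if_neg]
        have := j.isLt
        rw [h0]
        push_cast
        omega
    have memgood : ∀ r : Fin n, 0 < lam r →
        (M.updateRow r (fun j => N r j)).det =
          schur K n (Function.update lam r (lam r - 1)) := by
      intro r hpos
      rw [schur]
      congr 1
      apply Matrix.ext
      intro i j
      rw [Matrix.updateRow_apply]
      by_cases hi : i = r
      · subst hi
        rw [if_pos rfl]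
        simp only [hN, Matrix.of_apply, Function.update_self]
        congr 1
        have : ((lam i - 1 : ℕ) : ℤ) = (lam i : ℤ) - 1 := by omega
        rw [this]
        ring
      · rw [if_neg hi]
        simp only [hM, Matrix.of_apply, Function.update_of_ne hi]
    have coeff : ∀ r : Fin n, ((n + lam r - (r.val + 1) : ℕ) : MvPolynomial (Fin n) K)
        = C ((n : K) - 1 + ((lam r : ℤ) : K) - (r.val : K)) := by
      intro r
      rw [← map_natCast (C : K →+* MvPolynomial (Fin n) K)]
      congr 1
      have hle : r.val + 1 ≤ n := r.isLt
      rw [Nat.cast_sub (by omega)]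
      push_cast
      ring
    rw [← Finset.sum_filter_of_ne (p := fun r : Fin n =>
      0 < lam r ∧ Antitone (Function.update lam r (lam r - 1)))]
    · refine Finset.sum_congr rfl fun r hr => ?_
      obtain ⟨hpos, -⟩ := (Finset.mem_filter.mp hr).2
      rw [memgood r hpos, coeff r]
    · intro r _ hne
      by_contra hp
      exact hne (by rw [antifail r hp, mul_zero])
  calc ∑ i : Fin n, pderiv i (schur K n lam)
      = ∑ r : Fin n, (M.updateRow r (fun j => ∑ i : Fin n, pderiv i (M r j))).det := step1
    _ = ∑ r : Fin n,
          (C ((n : K) - 1 + ((lam r : ℤ) : K) - (r.val : K)) * (M.updateRow r (fun j => N r j)).det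
          + (M.updateRow r (fun j : Fin n => C ((j.val : K)) * N r j)).det) := by
        refine Finset.sum_congr rfl fun r _ => ?_
        rw [step2 r, Matrix.det_updateRow_add, Matrix.det_updateRow_smul]
    _ = _ := by
        rw [Finset.sum_add_distrib, claimB, add_zero, claimS]
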